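/- Let n be an odd positive integer and e > 2 an integer. Then T(2^e n) = 2·T(2^{e−1} n); consequently T(2^e n) = 2^{e−2}·S(n). -/

import Mathlib

open Finset

def Pred (n m : ℕ) : Prop :=
  m % 4 = 3 ∧ Nat.gcd m n = 1 ∧ Nat.gcd ((m - 1) / 2) n = 1

instance : ∀ n m, Decidable (Pred n m) := fun n m => by unfold Pred; infer_instance

lemma pred_shift (n m : ℕ) : Pred n (m + 4 * n) ↔ Pred n m := by
  unfold Pred
  have h4 : (m + 4 * n) % 4 = m % 4 := by omega
  rw [h4]
  by_cases h : m % 4 = 3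
  · have hg1 : Nat.gcd (m + 4 * n) n = Nat.gcd m n := Nat.gcd_add_mul_right_left n m 4
    have hd : (m + 4 * n - 1) / 2 = (m - 1) / 2 + 2 * n := by omega
    have hg2 : Nat.gcd ((m - 1) / 2 + 2 * n) n = Nat.gcd ((m - 1) / 2) n :=
      Nat.gcd_add_mul_right_left n ((m - 1) / 2) 2
    rw [hg1, hd, hg2]
  · simp [h]

lemma pred_shift_mul (n c m : ℕ) : Pred n (m + c * (4 * n)) ↔ Pred n m := by
  induction c with
  | zero => simp
  | succ c ih =>
    have h : m + (c + 1) * (4 * n) = (m + c * (4 * n)) + 4 * n := by ring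
    rw [h, pred_shift, ih]

lemma block_count (n : ℕ) (c : ℕ) :
    ((Ioc 0 (c * (4 * n))).filter (Pred n)).card
      = c * ((Ioc 0 (4 * n)).filter (Pred n)).card := by
  induction c with
  | zero => simp
  | succ c ih =>
    have hc1 : (c + 1) * (4 * n) = c * (4 * n) + 4 * n := by ring
    rw [hc1]
    have hle : c * (4 * n) ≤ c * (4 * n) + 4 * n := by omega
    have hsplit : Ioc 0 (c * (4 * n) + 4 * n)
        = Ioc 0 (c * (4 * n)) ∪ Ioc (c * (4 * n)) (c * (4 * n) + 4 * n) :=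
      (Finset.Ioc_union_Ioc_eq_Ioc (Nat.zero_le _) hle).symm
    rw [hsplit, Finset.filter_union, Finset.card_union_of_disjoint, ih]
    · have hcard : ((Ioc (c * (4 * n)) (c * (4 * n) + 4 * n)).filter (Pred n)).card
          = ((Ioc 0 (4 * n)).filter (Pred n)).card := by
        apply Finset.card_bij' (fun m _ => m - c * (4 * n)) (fun m _ => m + c * (4 * n))
        · intro m hm
          simp only [Finset.mem_filter, Finset.mem_Ioc] at hm ⊢
          refine ⟨⟨by omega, by omega⟩, ?_⟩
          have : m - c * (4 * n) + c * (4 * n) = m := by omega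
          rw [← pred_shift_mul n c, this]
          exact hm.2
        · intro m hm
          simp only [Finset.mem_filter, Finset.mem_Ioc] at hm ⊢
          refine ⟨⟨by omega, by omega⟩, (pred_shift_mul n c m).mpr hm.2⟩
        · intro m hm
          simp only [Finset.mem_filter, Finset.mem_Ioc] at hm
          omega
        · intro m hm; omega
      rw [hcard]; ring
    · apply Finset.disjoint_filter_filter
      rw [Finset.disjoint_left]
      intro a ha hb
      simp only [Finset.mem_Ioc] at ha hb
      omega

/-- `T(n) = #{ m odd : 1 ≤ m ≤ n, gcd(m,n) = 1, gcd((m−1)/2, n) = 1 }`. -/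
def Tcount (n : ℕ) : ℕ :=
  ((Finset.Icc 1 n).filter
    (fun m => m % 2 = 1 ∧ Nat.gcd m n = 1 ∧ Nat.gcd ((m - 1) / 2) n = 1)).card

/-- Schemmel's totient function. -/
def schemmel (n : ℕ) : ℕ :=
  ((Finset.Icc 1 n).filter (fun m => Nat.gcd m n = 1 ∧ Nat.gcd (m - 1) n = 1)).card


lemma icc_one (N : ℕ) : Finset.Icc 1 N = Finset.Ioc 0 N := rfl

lemma tcount_eq (n : ℕ) (hodd : Odd n) (e : ℕ) (he : 0 < e) :
    Tcount (2 ^ e * n) = ((Ioc 0 (2 ^ e * n)).filter (Pred n)).card := by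
  have key : ∀ x : ℕ, Nat.gcd x (2 ^ e * n) = 1 ↔ (x % 2 = 1 ∧ Nat.gcd x n = 1) := by
    intro x
    show Nat.Coprime x (2 ^ e * n) ↔ _
    rw [Nat.coprime_mul_iff_right, Nat.coprime_pow_right_iff he, Nat.coprime_two_right,
      Nat.odd_iff]
  unfold Tcount
  rw [icc_one]
  congr 1
  apply Finset.filter_congr
  intro m _
  rw [key m, key ((m - 1) / 2)]
  unfold Pred
  constructor
  · rintro ⟨h1, ⟨-, h2⟩, h3, h4⟩
    exact ⟨by omega, h2, h4⟩
  · rintro ⟨h1, h2, h4⟩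
    exact ⟨by omega, ⟨by omega, h2⟩, by omega, h4⟩

lemma t4 (n : ℕ) (hn : 0 < n) (hodd : Odd n) :
    ((Ioc 0 (4 * n)).filter (Pred n)).card = schemmel n := by
  rcases eq_or_lt_of_le (Nat.succ_le_of_lt hn) with h1 | h2
  · subst h1
    decide
  · -- n ≥ 2
    have h2n : 2 ≤ n := h2
    have hc2 : Nat.Coprime 2 n := hodd.coprime_two_left
    have hco4 : Nat.Coprime 4 n := by
      have := Nat.Coprime.pow_left 2 hc2
      norm_num at this
      exact this
    have uniq : ∀ a b : ℕ, 0 < a → a ≤ 4 * n → 0 < b → b ≤ 4 * n → a % 4 = 3 → b % 4 = 3 →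
        a % n = b % n → a = b := by
      have H : ∀ a b : ℕ, a ≤ b → 0 < a → a ≤ 4 * n → 0 < b → b ≤ 4 * n → a % 4 = 3 →
          b % 4 = 3 → a % n = b % n → a = b := by
        intro a b hab ha1 ha2 hb1 hb2 ha4 hb4 hmod
        have h4 : (b - a) % 4 = 0 := Nat.sub_mod_eq_zero_of_mod_eq (by omega)
        have hnn : (b - a) % n = 0 := Nat.sub_mod_eq_zero_of_mod_eq hmod.symm
        have hdvd : 4 * n ∣ b - a :=
          Nat.Coprime.mul_dvd_of_dvd_of_dvd hco4 (Nat.dvd_of_mod_eq_zero h4)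
            (Nat.dvd_of_mod_eq_zero hnn)
        have : b - a = 0 := Nat.eq_zero_of_dvd_of_lt hdvd (by omega)
        omega
      intro a b ha1 ha2 hb1 hb2 ha4 hb4 hmod
      rcases le_total a b with h | h
      · exact H a b h ha1 ha2 hb1 hb2 ha4 hb4 hmod
      · exact (H b a h hb1 hb2 ha1 ha2 hb4 ha4 hmod.symm).symm
    -- gcd transfer lemmas
    have gcd_mod : ∀ m : ℕ, Nat.gcd (m % n) n = Nat.gcd m n := by
      intro m
      rw [Nat.gcd_comm m n, Nat.gcd_rec n m]
    have gcd_pred_mod : ∀ m : ℕ, 0 < m % n → Nat.gcd (m % n - 1) n = Nat.gcd (m - 1) n := by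
      intro m hr
      have hq := Nat.div_add_mod m n
      have h : m - 1 = (m % n - 1) + n * (m / n) := by omega
      rw [h, Nat.gcd_add_mul_left_left]
    have gcd_half : ∀ m : ℕ, m % 4 = 3 → (Nat.gcd ((m - 1) / 2) n = 1 ↔ Nat.gcd (m - 1) n = 1) := by
      intro m hm
      have h : m - 1 = 2 * ((m - 1) / 2) := by omega
      conv_rhs => rw [h, Nat.Coprime.gcd_mul_left_cancel _ hc2]
    -- the backward map data
    set k : ℕ → ℕ := fun u => ((3 - (u : ZMod 4)) * (n : ZMod 4)).val with hk
    have hklt : ∀ u, k u < 4 := fun u => ZMod.val_lt _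
    have hn41 : (n : ZMod 4) * (n : ZMod 4) = 1 := by
      have hmod : ((n % 4 : ℕ) : ZMod 4) = (n : ZMod 4) := ZMod.natCast_mod n 4
      have : n % 4 = 1 ∨ n % 4 = 3 := by
        rcases hodd with ⟨t, ht⟩; omega
      rcases this with h | h <;> rw [← hmod, h] <;> decide
    have hk3 : ∀ u : ℕ, (u + k u * n) % 4 = 3 := by
      intro u
      have hcast : ((u + k u * n : ℕ) : ZMod 4) = 3 := by
        push_cast
        have hkc : ((k u : ℕ) : ZMod 4) = (3 - (u : ZMod 4)) * (n : ZMod 4) := by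
          simp [hk, ZMod.natCast_val, ZMod.cast_id]
        rw [hkc]
        calc (u : ZMod 4) + (3 - u) * n * n = u + (3 - u) * (n * n) := by ring
          _ = 3 := by rw [hn41]; ring
      have := congrArg ZMod.val hcast
      rwa [ZMod.val_natCast] at this
    -- forward and backward well-definedness
    have hfwd : ∀ m ∈ (Ioc 0 (4 * n)).filter (Pred n),
        m % n ∈ (Ioc 0 n).filter (fun u => Nat.gcd u n = 1 ∧ Nat.gcd (u - 1) n = 1) := by
      intro m hm
      simp only [Finset.mem_filter, Finset.mem_Ioc] at hm ⊢
      obtain ⟨⟨hm0, hm4n⟩, hm4, hg1, hg2⟩ := hm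
      have hgm : Nat.gcd (m % n) n = 1 := by rw [gcd_mod]; exact hg1
      have hr0 : 0 < m % n := by
        rcases Nat.eq_zero_or_pos (m % n) with h | h
        · rw [h] at hgm; simp at hgm; omega
        · exact h
      refine ⟨⟨hr0, le_of_lt (Nat.mod_lt _ (by omega))⟩, hgm, ?_⟩
      rw [gcd_pred_mod m hr0]
      exact (gcd_half m hm4).mp hg2
    have hbwd : ∀ u ∈ (Ioc 0 n).filter (fun u => Nat.gcd u n = 1 ∧ Nat.gcd (u - 1) n = 1),
        u + k u * n ∈ (Ioc 0 (4 * n)).filter (Pred n) := by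
      intro u hu
      simp only [Finset.mem_filter, Finset.mem_Ioc] at hu ⊢
      obtain ⟨⟨hu0, hun⟩, hg1, hg2⟩ := hu
      have hultn : u < n := by
        rcases eq_or_lt_of_le hun with h | h
        · exfalso; rw [h] at hg1; simp [Nat.gcd_self] at hg1; omega
        · exact h
      have hklt' := hklt u
      have hkn : k u * n ≤ 3 * n := Nat.mul_le_mul_right n (by omega)
      refine ⟨⟨by omega, by omega⟩, hk3 u, ?_, ?_⟩
      · rw [Nat.gcd_add_mul_right_left]; exact hg1
      · rw [gcd_half _ (hk3 u)]
        have h : u + k u * n - 1 = (u - 1) + k u * n := by omega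
        rw [h, Nat.gcd_add_mul_right_left]
        exact hg2
    rw [schemmel, icc_one]
    apply Finset.card_bij' (fun m _ => m % n) (fun u _ => u + k u * n) hfwd hbwd
    · -- left inverse : (m % n) + k (m % n) * n = m
      intro m hm
      have hmem := hbwd _ (hfwd m hm)
      simp only [Finset.mem_filter, Finset.mem_Ioc] at hm hmem
      apply uniq _ _ hmem.1.1 hmem.1.2 hm.1.1 hm.1.2 hmem.2.1 hm.2.1
      rw [Nat.add_mul_mod_self_right]
      exact Nat.mod_mod_of_dvd m (dvd_refl n)
    · intro u hu
      simp only [Finset.mem_filter, Finset.mem_Ioc] at hu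
      have hultn : u < n := by
        rcases eq_or_lt_of_le hu.1.2 with h | h
        · exfalso; have := hu.2.1; rw [h] at this; simp [Nat.gcd_self] at this; omega
        · exact h
      rw [Nat.add_mul_mod_self_right, Nat.mod_eq_of_lt hultn]

/-- For odd `n` and `e > 2`, `T(2^e·n) = 2·T(2^(e−1)·n)`, hence `T(2^e·n) = 2^(e−2)·S(n)`. -/
theorem stmt_16 (n : ℕ) (hn : 0 < n) (hodd : Odd n) (e : ℕ) (he : 2 < e) :
    Tcount (2 ^ e * n) = 2 * Tcount (2 ^ (e - 1) * n) ∧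
    Tcount (2 ^ e * n) = 2 ^ (e - 2) * schemmel n := by
  have key : ∀ f : ℕ, 2 ≤ f → Tcount (2 ^ f * n) = 2 ^ (f - 2) * schemmel n := by
    intro f hf
    rw [tcount_eq n hodd f (by omega)]
    have h : 2 ^ f * n = 2 ^ (f - 2) * (4 * n) := by
      rw [show (4 : ℕ) = 2 ^ 2 by norm_num, ← mul_assoc, ← pow_add]
      congr 2
      omega
    rw [h, block_count, t4 n hn hodd]
  have k1 := key e (by omega)
  have k2 := key (e - 1) (by omega)
  refine ⟨?_, k1⟩
  rw [k1, k2, show e - 1 - 2 = e - 3 from by omega, show e - 2 = (e - 3) + 1 from by omega,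
    pow_succ]
  ring
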